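/- Every Borel subset of [ℕ]^ω (with the topology inherited from 2^ℕ) is Ramsey: for every finite set s ⊆ ℕ and infinite set A ⊆ ℕ with max(s) < min(A \ s) making [s,A] nonempty, there exists B ∈ [s,A] such that either [s,B] ⊆ 𝒳 or [s,B] ∩ 𝒳 = ∅. -/

import Mathlib

open Classical in
/-- The characteristic-function embedding of `Set ℕ` into Cantor space `2^ℕ`. -/
noncomputable def charFun (A : Set ℕ) : ℕ → Bool := fun n => decide (n ∈ A)

/-- The topology on `Set ℕ` inherited from the product topology on `2^ℕ`. -/
noncomputable def cantorTopology : TopologicalSpace (Set ℕ) :=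
  TopologicalSpace.induced charFun inferInstance

/-- `[s,A] = {B ∈ [ℕ]^ω : s ⊏ B ⊆ A}`: the infinite `B ⊆ A` having the finite
set `s` as an initial segment (in increasing enumeration). -/
def EllSet (s : Finset ℕ) (A : Set ℕ) : Set (Set ℕ) :=
  {B | B.Infinite ∧ ↑s ⊆ B ∧ B ⊆ A ∧ ∀ x ∈ s, ∀ y ∈ B, y ∉ s → x < y}

namespace GP

open Set

/-- `(s, A)` is an admissible pair: `A` is infinite and lies entirely above `s`. -/
def Ok (s : Finset ℕ) (A : Set ℕ) : Prop := A.Infinite ∧ ∀ x ∈ s, ∀ y ∈ A, x < y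

/-- The infinite sets squeezed between `s` and `s ∪ A`. -/
def seg (s : Finset ℕ) (A : Set ℕ) : Set (Set ℕ) :=
  {B | B.Infinite ∧ ↑s ⊆ B ∧ B ⊆ ↑s ∪ A}

lemma seg_mono {s : Finset ℕ} {A A' : Set ℕ} (h : A ⊆ A') : seg s A ⊆ seg s A' :=
  fun B ⟨h1, h2, h3⟩ => ⟨h1, h2, h3.trans (union_subset_union_right _ h)⟩

lemma self_mem_seg {s : Finset ℕ} {A : Set ℕ} (hA : A.Infinite) : (↑s ∪ A) ∈ seg s A :=
  ⟨hA.mono subset_union_right, subset_union_left, subset_rfl⟩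

lemma infinite_of_mem_seg {s : Finset ℕ} {A B : Set ℕ} (h : B ∈ seg s A) : B.Infinite := h.1

/-- Chain-construction helper. -/
lemma exists_chain {α : Type*} (P : α → Prop) (R : α → α → Prop) (a0 : α) (h0 : P a0)
    (step : ∀ x, P x → ∃ y, P y ∧ R x y) :
    ∃ f : ℕ → α, f 0 = a0 ∧ (∀ n, P (f n)) ∧ ∀ n, R (f n) (f (n + 1)) := by
  choose g hg1 hg2 using step
  let F : ℕ → {x // P x} := fun n => Nat.rec ⟨a0, h0⟩ (fun _ p => ⟨g p.1 p.2, hg1 p.1 p.2⟩) n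
  exact ⟨fun n => (F n).1, rfl, fun n => (F n).2, fun n => hg2 _ _⟩

/-- Shrinking an infinite set finitely many times. -/
lemma finset_shrink {ι : Type*} (T : Finset ι) (Q : ι → Set ℕ → Prop)
    (hmono : ∀ i E E', E' ⊆ E → Q i E → Q i E')
    (E₀ : Set ℕ) (h₀ : E₀.Infinite)
    (hstep : ∀ i E, E ⊆ E₀ → E.Infinite → ∃ E', E' ⊆ E ∧ E'.Infinite ∧ Q i E') :
    ∃ E, E ⊆ E₀ ∧ E.Infinite ∧ ∀ i ∈ T, Q i E := by
  classical
  induction T using Finset.induction_on with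
  | empty => exact ⟨E₀, subset_rfl, h₀, by simp⟩
  | insert _ _ hi ih =>
    rename_i a T
    obtain ⟨E, hE₀, hEinf, hQ⟩ := ih
    obtain ⟨E', h1, h2, h3⟩ := hstep a E hE₀ hEinf
    refine ⟨E', h1.trans hE₀, h2, ?_⟩
    intro j hj
    rcases Finset.mem_insert.1 hj with rfl | hj
    · exact h3
    · exact hmono _ _ _ h1 (hQ j hj)

variable (𝒳 : Set (Set ℕ))

/-- Combinatorial forcing: `E` accepts `t`. -/
def Accepts (t : Finset ℕ) (E : Set ℕ) : Prop := seg t E ⊆ 𝒳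

/-- `E` rejects `t`: no infinite subset of `E` accepts `t`. -/
def Rejects (t : Finset ℕ) (E : Set ℕ) : Prop :=
  ∀ E', E' ⊆ E → E'.Infinite → ¬ Accepts 𝒳 t E'

variable {𝒳}

lemma Rejects.mono {t : Finset ℕ} {E E' : Set ℕ} (h : Rejects 𝒳 t E) (hE : E' ⊆ E) :
    Rejects 𝒳 t E' := fun F hF => h F (hF.trans hE)

lemma accepts_mono {t : Finset ℕ} {E E' : Set ℕ} (h : Accepts 𝒳 t E) (hE : E' ⊆ E) :
    Accepts 𝒳 t E' := fun B hB => h ((seg_mono hE) hB)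

/-- Every pair can be decided. -/
lemma exists_decide (t : Finset ℕ) (E : Set ℕ) (hE : E.Infinite) :
    ∃ E', E' ⊆ E ∧ E'.Infinite ∧ (Accepts 𝒳 t E' ∨ Rejects 𝒳 t E') := by
  by_cases h : ∃ E', E' ⊆ E ∧ E'.Infinite ∧ Accepts 𝒳 t E'
  · obtain ⟨E', h1, h2, h3⟩ := h
    exact ⟨E', h1, h2, Or.inl h3⟩
  · push_neg at h
    exact ⟨E, subset_rfl, hE, Or.inr fun E' h1 h2 => h E' h1 h2⟩

/-- Galvin's step: if `E` rejects `t`, some infinite `E' ⊆ E` rejects all one-point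
extensions of `t` by its own elements. -/
lemma reject_step {t : Finset ℕ} {E : Set ℕ} (hrej : Rejects 𝒳 t E) (hE : E.Infinite) :
    ∃ E', E' ⊆ E ∧ E'.Infinite ∧ ∀ n ∈ E', Rejects 𝒳 (insert n t) (E' ∩ Ioi n) := by
  classical
  have hioi : ∀ (F : Set ℕ) (n : ℕ), F.Infinite → (F ∩ Ioi n).Infinite := by
    intro F n hF
    have h : F ∩ Ioi n = F \ Iic n := by ext x; simp [not_le]
    rw [h]
    exact hF.diff (finite_Iic n)
  -- build the diagonal sequence
  set P : Set ℕ → Prop := fun F => F.Infinite ∧ F ⊆ E with hPdef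
  set R : Set ℕ → Set ℕ → Prop := fun F F' =>
    F' ⊆ F ∩ Ioi (sInf F) ∧
      (Accepts 𝒳 (insert (sInf F) t) F' ∨ Rejects 𝒳 (insert (sInf F) t) F') with hRdef
  have hstep : ∀ F, P F → ∃ F', P F' ∧ R F F' := by
    rintro F ⟨hFinf, hFE⟩
    obtain ⟨F', h1, h2, h3⟩ := exists_decide (𝒳 := 𝒳) (insert (sInf F) t) (F ∩ Ioi (sInf F))
      (hioi F _ hFinf)
    exact ⟨F', ⟨h2, (h1.trans inter_subset_left).trans hFE⟩, h1, h3⟩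
  obtain ⟨f, hf0, hfP, hfR⟩ := exists_chain P R E ⟨hE, subset_rfl⟩ hstep
  set c : ℕ → ℕ := fun k => sInf (f k) with hcdef
  have hcmem : ∀ k, c k ∈ f k := fun k => Nat.sInf_mem (hfP k).1.nonempty
  have hfsub : ∀ k, f (k + 1) ⊆ f k ∩ Ioi (c k) := fun k => (hfR k).1
  have hfmono : ∀ j k, k ≤ j → f j ⊆ f k := by
    intro j k h
    induction j with
    | zero => cases Nat.le_zero.1 h; exact subset_rfl
    | succ j ih =>
      rcases Nat.lt_or_ge k (j + 1) with h' | h'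
      · exact ((hfsub j).trans inter_subset_left).trans (ih (Nat.lt_succ_iff.1 h'))
      · cases le_antisymm h h'; exact subset_rfl
  have hcmono : StrictMono c := strictMono_nat_of_lt_succ fun k => ((hfsub k) (hcmem (k+1))).2
  have hcE : ∀ k, c k ∈ E := fun k => (hfP k).2 (hcmem k)
  have htail : ∀ k j, k < j → c j ∈ f (k + 1) := fun k j hkj => hfmono j (k+1) hkj (hcmem j)
  -- the accepting indices form a finite set
  set Acc : Set ℕ := {k | Accepts 𝒳 (insert (c k) t) (f (k + 1))} with hAccdef
  have hAccFin : Acc.Finite := by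
    by_contra hinf
    have hinf' : Acc.Infinite := hinf
    apply hrej (c '' Acc) ?_ (hinf'.image (hcmono.injective.injOn))
    · -- Accepts t (c '' Acc) : contradiction with rejection
      rintro C ⟨hCinf, htC, hCsub⟩
      have hne : (C \ ↑t).Nonempty := (hCinf.diff t.finite_toSet).nonempty
      set n := sInf (C \ ↑t) with hndef
      have hnmem : n ∈ C \ ↑t := Nat.sInf_mem hne
      have hnG : n ∈ c '' Acc := by
        rcases hCsub hnmem.1 with h | h
        · exact absurd h hnmem.2
        · exact h
      obtain ⟨k, hkAcc, hck⟩ := hnG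
      refine hkAcc ⟨hCinf, ?_, ?_⟩
      · intro x hx
        rcases Finset.mem_insert.1 (by exact_mod_cast hx) with rfl | hx
        · exact hck.symm ▸ hnmem.1
        · exact htC hx
      · intro y hy
        by_cases hyt : y ∈ (↑t : Set ℕ)
        · exact Or.inl (by exact_mod_cast Finset.mem_insert_of_mem (by exact_mod_cast hyt))
        · have hyn : n ≤ y := Nat.sInf_le ⟨hy, hyt⟩
          rcases eq_or_lt_of_le hyn with rfl | hlt
          · exact Or.inl (by rw [← hck]; exact_mod_cast Finset.mem_insert_self _ _)
          · rcases hCsub hy with h | h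
            · exact absurd h hyt
            · obtain ⟨j, _, hcj⟩ := h
              have hjk : k < j := hcmono.lt_iff_lt.1 (by rw [hck, hcj]; exact hlt)
              exact Or.inr (hcj ▸ htail k j hjk)
    · exact image_subset_iff.2 fun k _ => hcE k
  -- now remove the finitely many accepting indices
  refine ⟨c '' Accᶜ, image_subset_iff.2 fun k _ => hcE k,
    (hAccFin.infinite_compl).image (hcmono.injective.injOn), ?_⟩
  rintro n ⟨k, hk, rfl⟩
  have hdec := (hfR k).2
  have hrejk : Rejects 𝒳 (insert (c k) t) (f (k + 1)) := by
    rcases hdec with h | h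
    · exact absurd h hk
    · exact h
  refine hrejk.mono ?_
  rintro y ⟨⟨j, _, rfl⟩, hy⟩
  exact htail k j (hcmono.lt_iff_lt.1 hy)


/-- A completely Ramsey set. -/
def CR (𝒳 : Set (Set ℕ)) : Prop :=
  ∀ s A, Ok s A → ∃ B, B ⊆ A ∧ B.Infinite ∧ (seg s B ⊆ 𝒳 ∨ seg s B ∩ 𝒳 = ∅)

/-- A completely Ramsey null set. -/
def CR0 (𝒳 : Set (Set ℕ)) : Prop :=
  ∀ s A, Ok s A → ∃ B, B ⊆ A ∧ B.Infinite ∧ seg s B ∩ 𝒳 = ∅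

/-- The Ellentuck-open sets. -/
def EOpen (𝒳 : Set (Set ℕ)) : Prop :=
  ∀ B ∈ 𝒳, ∃ u U, Ok u U ∧ B ∈ seg u U ∧ seg u U ⊆ 𝒳

section CoreFacts

variable {E : ℕ → Set ℕ} {b : ℕ → ℕ} {F : ℕ → Finset ℕ}

lemma b_strictMono (hbE : ∀ k, b k ∈ E k) (hEk : ∀ k, E (k + 1) ⊆ E k ∩ Ioi (b k)) :
    StrictMono b :=
  strictMono_nat_of_lt_succ fun k => (hEk k (hbE (k + 1))).2

lemma E_antitone (hEk : ∀ k, E (k + 1) ⊆ E k ∩ Ioi (b k)) :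
    ∀ j k, k ≤ j → E j ⊆ E k := by
  intro j k h
  induction j with
  | zero => cases Nat.le_zero.1 h; exact subset_rfl
  | succ j ih =>
    rcases Nat.lt_or_ge k (j + 1) with h' | h'
    · exact ((hEk j).trans inter_subset_left).trans (ih (Nat.lt_succ_iff.1 h'))
    · cases le_antisymm h h'; exact subset_rfl

lemma range_b_tail (hbE : ∀ k, b k ∈ E k) (hEk : ∀ k, E (k + 1) ⊆ E k ∩ Ioi (b k)) :
    ∀ m, ∀ y ∈ range b, b m < y → y ∈ E (m + 1) := by
  rintro m y ⟨j, rfl⟩ hy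
  have hj : m < j := (b_strictMono hbE hEk).lt_iff_lt.1 hy
  exact E_antitone hEk j (m + 1) hj (hbE j)

lemma F_coe (hF0 : F 0 = ∅) (hFk : ∀ k, F (k + 1) = insert (b k) (F k)) :
    ∀ k, (↑(F k) : Set ℕ) = b '' Iio k := by
  intro k
  induction k with
  | zero =>
    have h : Iio 0 = (∅ : Set ℕ) := by ext x; simp
    simp [hF0, h]
  | succ k ih =>
    rw [hFk k, Finset.coe_insert, ih]
    ext x
    simp only [Set.mem_insert_iff, mem_image, mem_Iio, Nat.lt_succ_iff]
    constructor
    · rintro (rfl | ⟨j, hj, rfl⟩)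
      · exact ⟨k, le_rfl, rfl⟩
      · exact ⟨j, hj.le, rfl⟩
    · rintro ⟨j, hj, rfl⟩
      rcases eq_or_lt_of_le hj with rfl | hj
      · exact Or.inl rfl
      · exact Or.inr ⟨j, hj, rfl⟩

end CoreFacts

/-- Core fusion construction. -/
lemma core_construction (s : Finset ℕ) (A : Set ℕ) (hOk : Ok s A)
    (Inv : ℕ → Finset ℕ → Set ℕ → Prop)
    (hinit : Inv 0 ∅ A)
    (hstep : ∀ k F E, E.Infinite → E ⊆ A → (∀ y ∈ E, ∀ x ∈ s ∪ F, x < y) → Inv k F E →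
      ∃ n ∈ E, ∃ E', E' ⊆ E ∩ Ioi n ∧ E'.Infinite ∧ Inv (k + 1) (insert n F) E') :
    ∃ (F : ℕ → Finset ℕ) (E : ℕ → Set ℕ) (b : ℕ → ℕ),
      F 0 = ∅ ∧ E 0 = A ∧
      (∀ k, F (k + 1) = insert (b k) (F k)) ∧
      (∀ k, b k ∈ E k) ∧
      (∀ k, E (k + 1) ⊆ E k ∩ Ioi (b k)) ∧
      (∀ k, (E k).Infinite) ∧ (∀ k, E k ⊆ A) ∧
      (∀ k, ∀ y ∈ E k, ∀ x ∈ s ∪ F k, x < y) ∧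
      (∀ k, Inv k (F k) (E k)) := by
  classical
  set P : ℕ × Finset ℕ × Set ℕ → Prop := fun x =>
    x.2.2.Infinite ∧ x.2.2 ⊆ A ∧ (∀ y ∈ x.2.2, ∀ z ∈ s ∪ x.2.1, z < y) ∧ Inv x.1 x.2.1 x.2.2
    with hP
  set R : ℕ × Finset ℕ × Set ℕ → ℕ × Finset ℕ × Set ℕ → Prop := fun x y =>
    y.1 = x.1 + 1 ∧ ∃ n, n ∈ x.2.2 ∧ y.2.1 = insert n x.2.1 ∧ y.2.2 ⊆ x.2.2 ∩ Ioi n with hR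
  have h0 : P (0, ∅, A) := by
    refine ⟨hOk.1, subset_rfl, ?_, hinit⟩
    intro y hy z hz
    simp only [Finset.union_empty] at hz
    exact hOk.2 z hz y hy
  have hstep' : ∀ x, P x → ∃ y, P y ∧ R x y := by
    rintro ⟨k, F, E⟩ ⟨h1, h2, h3, h4⟩
    obtain ⟨n, hn, E', hE'sub, hE'inf, hE'inv⟩ := hstep k F E h1 h2 h3 h4
    refine ⟨(k + 1, insert n F, E'), ⟨hE'inf, (hE'sub.trans inter_subset_left).trans h2, ?_, hE'inv⟩,
      rfl, n, hn, rfl, hE'sub⟩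
    intro y hy z hz
    rcases Finset.mem_union.1 hz with hz | hz
    · exact h3 y (hE'sub hy).1 z (Finset.mem_union_left _ hz)
    · rcases Finset.mem_insert.1 hz with rfl | hz
      · exact (hE'sub hy).2
      · exact h3 y (hE'sub hy).1 z (Finset.mem_union_right _ hz)
  obtain ⟨f, hf0, hfP, hfR⟩ := exists_chain P R (0, ∅, A) h0 hstep'
  have hidx : ∀ k, (f k).1 = k := by
    intro k
    induction k with
    | zero => rw [hf0]
    | succ k ih => rw [(hfR k).1, ih]
  have hb : ∀ k, ∃ n, n ∈ (f k).2.2 ∧ (f (k+1)).2.1 = insert n (f k).2.1 ∧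
      (f (k+1)).2.2 ⊆ (f k).2.2 ∩ Ioi n := fun k => (hfR k).2
  choose b hb1 hb2 hb3 using hb
  refine ⟨fun k => (f k).2.1, fun k => (f k).2.2, b, by simp [hf0], by simp [hf0],
    hb2, hb1, hb3, fun k => (hfP k).1, fun k => (hfP k).2.1, fun k => (hfP k).2.2.1, fun k => ?_⟩
  have := (hfP k).2.2.2
  rwa [hidx k] at this

/-- Ellentuck-open sets are completely Ramsey. -/
lemma eopen_cr {𝒳 : Set (Set ℕ)} (h𝒳 : EOpen 𝒳) : CR 𝒳 := by
  classical
  intro s A hOk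
  obtain ⟨A', hA'A, hA'inf, hdec⟩ := exists_decide (𝒳 := 𝒳) s A hOk.1
  rcases hdec with hacc | hrej
  · exact ⟨A', hA'A, hA'inf, Or.inl hacc⟩
  -- rejection branch
  have hOk' : Ok s A' := ⟨hA'inf, fun x hx y hy => hOk.2 x hx y (hA'A hy)⟩
  set Inv : ℕ → Finset ℕ → Set ℕ → Prop :=
    fun _ F E => ∀ t, s ⊆ t → t ⊆ s ∪ F → Rejects 𝒳 t E with hInvdef
  have hinit : Inv 0 ∅ A' := by
    intro t hst hts
    rw [Finset.union_empty] at hts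
    rw [Finset.Subset.antisymm hts hst]
    exact hrej
  have hstep : ∀ k F E, E.Infinite → E ⊆ A' → (∀ y ∈ E, ∀ x ∈ s ∪ F, x < y) → Inv k F E →
      ∃ n ∈ E, ∃ E', E' ⊆ E ∩ Ioi n ∧ E'.Infinite ∧ Inv (k + 1) (insert n F) E' := by
    intro k F E hEinf hEA hord hInvE
    -- shrink so that all relevant one-point extensions are rejected
    obtain ⟨E', hE'E, hE'inf, hE'rej⟩ := finset_shrink (s ∪ F).powerset
      (fun t' E' => (s ⊆ t' ∧ t' ⊆ s ∪ F) → ∀ n ∈ E', Rejects 𝒳 (insert n t') (E' ∩ Ioi n))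
      (by
        intro t' G G' hsub h hst n hn
        exact (h hst n (hsub hn)).mono (inter_subset_inter hsub subset_rfl))
      E hEinf
      (by
        intro t' G hGE hGinf
        by_cases hst : s ⊆ t' ∧ t' ⊆ s ∪ F
        · obtain ⟨G', h1, h2, h3⟩ := reject_step (t := t')
            ((hInvE t' hst.1 hst.2).mono hGE) hGinf
          exact ⟨G', h1, h2, fun _ => h3⟩
        · exact ⟨G, subset_rfl, hGinf, fun h => absurd h hst⟩)
    have hE'ne : E'.Nonempty := hE'inf.nonempty
    set n := sInf E' with hndef
    have hnE' : n ∈ E' := Nat.sInf_mem hE'ne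
    have hns : n ∉ s := fun h => lt_irrefl n (hord n (hE'E hnE') n (Finset.mem_union_left _ h))
    refine ⟨n, hE'E hnE', E' ∩ Ioi n, inter_subset_inter hE'E subset_rfl, ?_, ?_⟩
    · have h : E' ∩ Ioi n = E' \ Iic n := by ext x; simp [not_le]
      rw [h]
      exact hE'inf.diff (finite_Iic n)
    · intro t hst hts
      by_cases hnt : n ∈ t
      · have ht0 : s ⊆ t.erase n := fun x hx =>
          Finset.mem_erase.2 ⟨fun h => hns (h ▸ hx), hst hx⟩
        have ht0' : t.erase n ⊆ s ∪ F := by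
          intro x hx
          obtain ⟨hxn, hxt⟩ := Finset.mem_erase.1 hx
          rcases Finset.mem_union.1 (hts hxt) with h | h
          · exact Finset.mem_union_left _ h
          · rcases Finset.mem_insert.1 h with rfl | h
            · exact absurd rfl hxn
            · exact Finset.mem_union_right _ h
        have := hE'rej (t.erase n) (Finset.mem_powerset.2 ht0') ⟨ht0, ht0'⟩ n hnE'
        rwa [Finset.insert_erase hnt] at this
      · have hts' : t ⊆ s ∪ F := by
          intro x hx
          rcases Finset.mem_union.1 (hts hx) with h | h
          · exact Finset.mem_union_left _ h
          · rcases Finset.mem_insert.1 h with rfl | h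
            · exact absurd hx hnt
            · exact Finset.mem_union_right _ h
        exact (hInvE t hst hts').mono ((inter_subset_left).trans hE'E)
  obtain ⟨F, E, b, hF0, hE0, hFk, hbE, hEk, hEinf, hEA, hord, hInv⟩ :=
    core_construction s A' hOk' Inv hinit hstep
  have hbmono : StrictMono b := b_strictMono hbE hEk
  set B : Set ℕ := range b with hBdef
  have hBA' : B ⊆ A' := by rintro y ⟨j, rfl⟩; exact hEA j (hbE j)
  have hBinf : B.Infinite := infinite_range_of_injective hbmono.injective
  refine ⟨B, hBA'.trans hA'A, hBinf, Or.inr ?_⟩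
  rw [eq_empty_iff_forall_notMem]
  rintro C ⟨⟨hCinf, hsC, hCsub⟩, hC𝒳⟩
  obtain ⟨u, U, hOkU, hCuU, hsegsub⟩ := h𝒳 C hC𝒳
  set t : Finset ℕ := s ∪ u with htdef
  have htC : ↑t ⊆ C := by
    rw [htdef, Finset.coe_union]
    exact union_subset hsC hCuU.2.1
  -- every element of `C \ t` lies in `B` and is above every element of `t`
  have hDmem : ∀ y ∈ C \ ↑t, y ∈ B ∧ ∀ x ∈ t, x < y := by
    rintro y ⟨hyC, hyt⟩
    have hyB : y ∈ B := by
      rcases hCsub hyC with h | h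
      · exact absurd (Finset.mem_coe.1 (by exact_mod_cast h) |> fun h' =>
          Finset.mem_union_left u h') (fun h' => hyt (by exact_mod_cast h'))
      · exact h
    refine ⟨hyB, ?_⟩
    intro x hx
    rcases Finset.mem_union.1 hx with hxs | hxu
    · exact hOk.2 x hxs y (hA'A (hBA' hyB))
    · have hyU : y ∈ U := by
        rcases hCuU.2.2 hyC with h | h
        · exact absurd (by exact_mod_cast h) (fun h' : y ∈ u =>
            hyt (by exact_mod_cast Finset.mem_union_right s h'))
        · exact h
      exact hOkU.2 x hxu y hyU
  -- find a stage k with `t ⊆ s ∪ F k` and `C \ t ⊆ E k`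
  obtain ⟨k, htk, hDk⟩ : ∃ k, t ⊆ s ∪ F k ∧ C \ ↑t ⊆ E k := by
    have htB : ∀ x ∈ t, x ∉ s → x ∈ B := by
      intro x hx hxs
      rcases hCsub (htC hx) with h | h
      · exact absurd (by exact_mod_cast h) hxs
      · exact h
    by_cases hts : t.filter (fun x => x ∉ s) = ∅
    · refine ⟨0, ?_, ?_⟩
      · intro x hx
        by_cases hxs : x ∈ s
        · exact Finset.mem_union_left _ hxs
        · exact ((Finset.filter_eq_empty_iff.1 hts) hx hxs).elim
      · intro y hy
        obtain ⟨⟨j, rfl⟩, _⟩ := hDmem y hy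
        exact E_antitone hEk j 0 (Nat.zero_le j) (hbE j)
    · have hne : (t.filter (fun x => x ∉ s)).Nonempty := Finset.nonempty_iff_ne_empty.2 hts
      set v := (t.filter (fun x => x ∉ s)).max' hne with hvdef
      have hvmem := (t.filter (fun x => x ∉ s)).max'_mem hne
      have hvt : v ∈ t := (Finset.mem_filter.1 hvmem).1
      have hvB : v ∈ B := htB v hvt (Finset.mem_filter.1 hvmem).2
      obtain ⟨m, hm⟩ := hvB
      refine ⟨m + 1, ?_, ?_⟩
      · intro x hx
        by_cases hxs : x ∈ s
        · exact Finset.mem_union_left _ hxs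
        · obtain ⟨j, rfl⟩ := htB x hx hxs
          have hxv : b j ≤ v := (t.filter (fun x => x ∉ s)).le_max' _
            (Finset.mem_filter.2 ⟨hx, hxs⟩)
          have hjm : j ≤ m := hbmono.le_iff_le.1 (hm ▸ hxv)
          have : b j ∈ (↑(F (m + 1)) : Set ℕ) := by
            rw [F_coe hF0 hFk]
            exact ⟨j, Nat.lt_succ_of_le hjm, rfl⟩
          exact Finset.mem_union_right _ this
      · intro y hy
        obtain ⟨hyB, hygt⟩ := hDmem y hy
        exact range_b_tail hbE hEk m y hyB (hm ▸ hygt v hvt)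
  -- contradiction with rejection of `t`
  have hrejt : Rejects 𝒳 t (E k) := hInv k t Finset.subset_union_left htk
  have hDinf : (C \ ↑t).Infinite := hCinf.diff t.finite_toSet
  apply hrejt (C \ ↑t) hDk hDinf
  intro C' hC'
  apply hsegsub
  have hC'C : C' ⊆ C := hC'.2.2.trans (by rw [union_diff_cancel htC])
  have huC' : (↑u : Set ℕ) ⊆ C' := by
    refine subset_trans ?_ hC'.2.1
    exact_mod_cast Finset.coe_subset.2 (Finset.subset_union_right (s₁ := s))
  exact ⟨hC'.1, huC', hC'C.trans hCuU.2.2⟩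



lemma CR0.mono {M N : Set (Set ℕ)} (h : CR0 N) (hMN : M ⊆ N) : CR0 M := by
  intro s A hOk
  obtain ⟨B, h1, h2, h3⟩ := h s A hOk
  exact ⟨B, h1, h2, eq_empty_of_subset_empty (h3 ▸ inter_subset_inter subset_rfl hMN)⟩

/-- Completely Ramsey null sets are closed under countable unions (the fusion lemma). -/
lemma cr0_iUnion (X : ℕ → Set (Set ℕ)) (h : ∀ i, CR0 (X i)) : CR0 (⋃ i, X i) := by
  classical
  intro s A hOk
  set Inv : ℕ → Finset ℕ → Set ℕ → Prop := fun k F E =>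
    ∀ t, s ⊆ t → t ⊆ s ∪ F → ∀ i < k, seg t E ∩ X i = ∅ with hInvdef
  have hinit : Inv 0 ∅ A := fun t _ _ i hi => absurd hi (Nat.not_lt_zero i)
  have hstep : ∀ k F E, E.Infinite → E ⊆ A → (∀ y ∈ E, ∀ x ∈ s ∪ F, x < y) → Inv k F E →
      ∃ n ∈ E, ∃ E', E' ⊆ E ∩ Ioi n ∧ E'.Infinite ∧ Inv (k + 1) (insert n F) E' := by
    intro k F E hEinf hEA hord _
    set n := sInf E with hndef
    have hnE : n ∈ E := Nat.sInf_mem hEinf.nonempty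
    have hE0inf : (E ∩ Ioi n).Infinite := by
      have h' : E ∩ Ioi n = E \ Iic n := by ext x; simp [not_le]
      rw [h']
      exact hEinf.diff (finite_Iic n)
    obtain ⟨E', hE'sub, hE'inf, hE'⟩ := finset_shrink
      ((s ∪ insert n F).powerset ×ˢ Finset.range (k + 1))
      (fun p G => (s ⊆ p.1 ∧ p.1 ⊆ s ∪ insert n F) → seg p.1 G ∩ X p.2 = ∅)
      (by
        intro p G G' hsub hQ hst
        exact eq_empty_of_subset_empty (hQ hst ▸ inter_subset_inter (seg_mono hsub) subset_rfl))
      (E ∩ Ioi n) hE0inf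
      (by
        rintro ⟨t, i⟩ G hGsub hGinf
        by_cases hst : s ⊆ t ∧ t ⊆ s ∪ insert n F
        · have hOkt : Ok t G := by
            refine ⟨hGinf, fun x hx y hy => ?_⟩
            rcases Finset.mem_union.1 (hst.2 hx) with h' | h'
            · exact hord y (hGsub hy).1 x (Finset.mem_union_left _ h')
            · rcases Finset.mem_insert.1 h' with rfl | h'
              · exact (hGsub hy).2
              · exact hord y (hGsub hy).1 x (Finset.mem_union_right _ h')
          obtain ⟨G', h1, h2, h3⟩ := h i t G hOkt
          exact ⟨G', h1, h2, fun _ => h3⟩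
        · exact ⟨G, subset_rfl, hGinf, fun h' => absurd h' hst⟩)
    refine ⟨n, hnE, E', hE'sub, hE'inf, ?_⟩
    intro t hst hts i hik
    exact hE' (t, i) (Finset.mem_product.2 ⟨Finset.mem_powerset.2 hts,
      Finset.mem_range.2 hik⟩) ⟨hst, hts⟩
  obtain ⟨F, E, b, hF0, hE0, hFk, hbE, hEk, hEinf, hEA, hord, hInv⟩ :=
    core_construction s A hOk Inv hinit hstep
  have hbmono : StrictMono b := b_strictMono hbE hEk
  set B : Set ℕ := range b with hBdef
  have hBA : B ⊆ A := by rintro y ⟨j, rfl⟩; exact hEA j (hbE j)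
  have hBinf : B.Infinite := infinite_range_of_injective hbmono.injective
  refine ⟨B, hBA, hBinf, ?_⟩
  rw [eq_empty_iff_forall_notMem]
  rintro C ⟨⟨hCinf, hsC, hCsub⟩, hCX⟩
  obtain ⟨Xi, ⟨i, rfl⟩, hCXi⟩ := hCX
  -- the elements of `C` beyond `s` all lie in `B`
  have hD : C \ ↑s ⊆ B := by
    rintro y ⟨hyC, hys⟩
    rcases hCsub hyC with h' | h'
    · exact absurd h' hys
    · exact h'
  have hDinf : (C \ ↑s).Infinite := hCinf.diff s.finite_toSet
  have hpre : (b ⁻¹' (C \ ↑s)).Infinite := by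
    by_contra hfin
    rw [not_infinite] at hfin
    exact hDinf ((hfin.image b).subset (by
      rintro y hy
      obtain ⟨j, rfl⟩ := hD hy
      exact mem_image_of_mem b hy))
  obtain ⟨m, hmD, hmi⟩ := hpre.exists_gt i
  have hbmD : b m ∈ C \ ↑s := hmD
  have hfin : (C \ ↑s ∩ Iic (b m)).Finite := (finite_Iic (b m)).subset inter_subset_right
  set t : Finset ℕ := s ∪ hfin.toFinset with htdef
  have htcoe : (↑t : Set ℕ) = ↑s ∪ (C \ ↑s ∩ Iic (b m)) := by
    rw [htdef, Finset.coe_union, hfin.coe_toFinset]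
  have hst : s ⊆ t := Finset.subset_union_left
  have htk : t ⊆ s ∪ F (m + 1) := by
    intro x hx
    rcases Finset.mem_union.1 hx with h' | h'
    · exact Finset.mem_union_left _ h'
    · have hx' : x ∈ C \ ↑s ∩ Iic (b m) := hfin.mem_toFinset.1 h'
      obtain ⟨j, rfl⟩ := hD hx'.1
      have hjm : j ≤ m := hbmono.le_iff_le.1 hx'.2
      have : b j ∈ (↑(F (m + 1)) : Set ℕ) := by
        rw [F_coe hF0 hFk]
        exact ⟨j, Nat.lt_succ_of_le hjm, rfl⟩
      exact Finset.mem_union_right _ this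
  have hCseg : C ∈ seg t (E (m + 1)) := by
    refine ⟨hCinf, ?_, ?_⟩
    · rw [htcoe]
      exact union_subset hsC (fun y hy => hy.1.1)
    · intro y hyC
      by_cases hys : y ∈ (↑s : Set ℕ)
      · exact Or.inl (htcoe ▸ Or.inl hys)
      · by_cases hyle : y ≤ b m
        · exact Or.inl (htcoe ▸ Or.inr ⟨⟨hyC, hys⟩, hyle⟩)
        · exact Or.inr (range_b_tail hbE hEk m y (hD ⟨hyC, hys⟩) (lt_of_not_ge hyle))
  have := hInv (m + 1) t hst htk i (Nat.lt_succ_of_le hmi.le)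
  exact absurd (mem_inter hCseg hCXi) (this ▸ notMem_empty C)

/-- The Ellentuck interior of a set. -/
def IntE (Y : Set (Set ℕ)) : Set (Set ℕ) :=
  {B | ∃ u U, Ok u U ∧ B ∈ seg u U ∧ seg u U ⊆ Y}

lemma eopen_IntE (Y : Set (Set ℕ)) : EOpen (IntE Y) := by
  rintro B ⟨u, U, h1, h2, h3⟩
  exact ⟨u, U, h1, h2, fun C hC => ⟨u, U, h1, hC, h3⟩⟩

lemma IntE_subset (Y : Set (Set ℕ)) : IntE Y ⊆ Y := by
  rintro B ⟨u, U, _, h2, h3⟩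
  exact h3 h2

lemma eopen_union {O₁ O₂ : Set (Set ℕ)} (h₁ : EOpen O₁) (h₂ : EOpen O₂) : EOpen (O₁ ∪ O₂) := by
  rintro B (hB | hB)
  · obtain ⟨u, U, ha, hb, hc⟩ := h₁ B hB
    exact ⟨u, U, ha, hb, hc.trans subset_union_left⟩
  · obtain ⟨u, U, ha, hb, hc⟩ := h₂ B hB
    exact ⟨u, U, ha, hb, hc.trans subset_union_right⟩

lemma eopen_iUnion {O : ℕ → Set (Set ℕ)} (h : ∀ i, EOpen (O i)) : EOpen (⋃ i, O i) := by
  rintro B hB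
  obtain ⟨Oi, ⟨i, rfl⟩, hBO⟩ := hB
  obtain ⟨u, U, ha, hb, hc⟩ := h i B hBO
  exact ⟨u, U, ha, hb, hc.trans (subset_iUnion O i)⟩

lemma cr0_empty : CR0 (∅ : Set (Set ℕ)) := fun s A hOk =>
  ⟨A, subset_rfl, hOk.1, inter_empty _⟩

lemma cr0_union {M N : Set (Set ℕ)} (hM : CR0 M) (hN : CR0 N) : CR0 (M ∪ N) := by
  have := cr0_iUnion (fun i => if i = 0 then M else N) (by
    intro i
    by_cases h : i = 0 <;> simp [h, hM, hN])
  refine this.mono ?_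
  rintro C (hC | hC)
  · exact mem_iUnion.2 ⟨0, by simpa using hC⟩
  · exact mem_iUnion.2 ⟨1, by simpa using hC⟩

/-- The boundary of an Ellentuck-open set is completely Ramsey null. -/
lemma cr0_boundary {O : Set (Set ℕ)} (hO : EOpen O) : CR0 (Oᶜ \ IntE Oᶜ) := by
  intro s A hOk
  obtain ⟨B, hBA, hBinf, hcase⟩ := eopen_cr (eopen_union hO (eopen_IntE Oᶜ)) s A hOk
  refine ⟨B, hBA, hBinf, ?_⟩
  rcases hcase with hsub | hdisj
  · rw [eq_empty_iff_forall_notMem]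
    rintro C ⟨hC1, hC2, hC3⟩
    rcases hsub hC1 with h | h
    · exact hC2 h
    · exact hC3 h
  · have hsub : seg s B ⊆ IntE Oᶜ := by
      intro C hC
      refine ⟨s, B, ⟨hBinf, fun x hx y hy => hOk.2 x hx y (hBA hy)⟩, hC, ?_⟩
      intro C' hC'
      intro hC'O
      exact (hdisj ▸ mem_inter hC' (Or.inl hC'O) : (C' : Set ℕ) ∈ (∅ : Set (Set ℕ)))
    rw [eq_empty_iff_forall_notMem]
    rintro C ⟨hC1, _, hC3⟩
    exact hC3 (hsub hC1)

/-- Sets with the Ellentuck Baire property. -/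
def BP (Y : Set (Set ℕ)) : Prop :=
  ∃ O, EOpen O ∧ CR0 ((Y \ O) ∪ (O \ Y))

lemma bp_of_eopen {O : Set (Set ℕ)} (hO : EOpen O) : BP O :=
  ⟨O, hO, cr0_empty.mono (by simp)⟩

lemma bp_empty : BP (∅ : Set (Set ℕ)) :=
  ⟨∅, fun B hB => absurd hB (notMem_empty B), cr0_empty.mono (by simp)⟩

lemma bp_compl {Y : Set (Set ℕ)} (hY : BP Y) : BP Yᶜ := by
  obtain ⟨O, hO, hM⟩ := hY
  refine ⟨IntE Oᶜ, eopen_IntE Oᶜ, (cr0_union hM (cr0_boundary hO)).mono ?_⟩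
  rintro C (⟨hC1, hC2⟩ | ⟨hC1, hC2⟩)
  · -- C ∈ Yᶜ, C ∉ IntE Oᶜ
    by_cases hCO : C ∈ O
    · exact Or.inl (Or.inr ⟨hCO, hC1⟩)
    · exact Or.inr ⟨hCO, hC2⟩
  · -- C ∈ IntE Oᶜ, C ∈ Y
    exact Or.inl (Or.inl ⟨not_not.1 hC2, IntE_subset Oᶜ hC1⟩)

lemma bp_iUnion {Y : ℕ → Set (Set ℕ)} (hY : ∀ i, BP (Y i)) : BP (⋃ i, Y i) := by
  choose O hO hM using hY
  refine ⟨⋃ i, O i, eopen_iUnion hO, (cr0_iUnion _ hM).mono ?_⟩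
  rintro C (⟨hC1, hC2⟩ | ⟨hC1, hC2⟩)
  · obtain ⟨Yi, ⟨i, rfl⟩, hCY⟩ := hC1
    exact mem_iUnion.2 ⟨i, Or.inl ⟨hCY, fun h => hC2 (mem_iUnion.2 ⟨i, h⟩)⟩⟩
  · obtain ⟨Oi, ⟨i, rfl⟩, hCO⟩ := hC1
    exact mem_iUnion.2 ⟨i, Or.inr ⟨hCO, fun h => hC2 (mem_iUnion.2 ⟨i, h⟩)⟩⟩

/-- Sets with the Ellentuck Baire property are completely Ramsey. -/
lemma bp_cr {Y : Set (Set ℕ)} (hY : BP Y) : CR Y := by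
  obtain ⟨O, hO, hM⟩ := hY
  intro s A hOk
  obtain ⟨B₁, hB₁A, hB₁inf, hB₁⟩ := hM s A hOk
  have hOk₁ : Ok s B₁ := ⟨hB₁inf, fun x hx y hy => hOk.2 x hx y (hB₁A hy)⟩
  obtain ⟨B, hBB₁, hBinf, hcase⟩ := eopen_cr hO s B₁ hOk₁
  have hsegB₁ : seg s B ⊆ seg s B₁ := seg_mono hBB₁
  have hMfree : ∀ C ∈ seg s B, C ∉ (Y \ O) ∪ (O \ Y) := by
    intro C hC hCM
    exact (hB₁ ▸ mem_inter (hsegB₁ hC) hCM : C ∈ (∅ : Set (Set ℕ)))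
  refine ⟨B, hBB₁.trans hB₁A, hBinf, ?_⟩
  rcases hcase with hsub | hdisj
  · refine Or.inl fun C hC => ?_
    by_contra hCY
    exact hMfree C hC (Or.inr ⟨hsub hC, hCY⟩)
  · refine Or.inr ?_
    rw [eq_empty_iff_forall_notMem]
    rintro C ⟨hC1, hC2⟩
    have hCO : C ∉ O := fun h => (hdisj ▸ mem_inter hC1 h : C ∈ (∅ : Set (Set ℕ)))
    exact hMfree C hC1 (Or.inl ⟨hC2, hCO⟩)

lemma cr0_of_finite {M : Set (Set ℕ)} (hM : ∀ C ∈ M, C.Finite) : CR0 M := by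
  intro s A hOk
  refine ⟨A, subset_rfl, hOk.1, eq_empty_iff_forall_notMem.2 ?_⟩
  rintro C ⟨hC1, hC2⟩
  exact hC1.1 (hM C hC2)

/-- Every open set in the Cantor topology has the Ellentuck Baire property. -/
lemma bp_cantorOpen {U : Set (Set ℕ)} (hU : @IsOpen (Set ℕ) cantorTopology U) : BP U := by
  classical
  obtain ⟨V, hVopen, rfl⟩ :=
    (isOpen_induced_iff (f := charFun) (t := inferInstance)).1 hU
  set O : Set (Set ℕ) := charFun ⁻¹' V ∩ {C | C.Infinite} with hOdef
  have hO : EOpen O := by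
    rintro B ⟨hBV, hBinf⟩
    obtain ⟨I, w, hw, hsub⟩ := isOpen_pi_iff.1 hVopen (charFun B) hBV
    set k := I.sup id + 1 with hkdef
    have hIk : ∀ n ∈ I, n < k := fun n hn => Nat.lt_succ_of_le (Finset.le_sup (f := id) hn)
    have hufin : (B ∩ Iio k).Finite := (finite_Iio k).subset inter_subset_right
    set u := hufin.toFinset with hudef
    have hucoe : (↑u : Set ℕ) = B ∩ Iio k := hufin.coe_toFinset
    set U' : Set ℕ := B ∩ Ici k with hU'def
    have hU'inf : U'.Infinite := by
      have h : U' = B \ Iio k := by ext x; simp [hU'def, not_lt]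
      rw [h]
      exact hBinf.diff (finite_Iio k)
    have hOku : Ok u U' := by
      refine ⟨hU'inf, fun x hx y hy => ?_⟩
      have hxk : x < k := (hufin.mem_toFinset.1 hx).2
      exact lt_of_lt_of_le hxk hy.2
    have hBseg : B ∈ seg u U' := by
      refine ⟨hBinf, by rw [hucoe]; exact inter_subset_left, ?_⟩
      intro y hy
      rcases Nat.lt_or_ge y k with h | h
      · exact Or.inl (hucoe ▸ ⟨hy, h⟩)
      · exact Or.inr ⟨hy, h⟩
    refine ⟨u, U', hOku, hBseg, ?_⟩
    rintro C ⟨hCinf, huC, hCsub⟩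
    have hmemiff : ∀ n, n < k → (n ∈ C ↔ n ∈ B) := by
      intro n hn
      constructor
      · intro hnC
        rcases hCsub hnC with h | h
        · exact (hucoe ▸ h).1
        · exact absurd h.2 (not_le.2 hn)
      · intro hnB
        exact huC (hucoe ▸ ⟨hnB, hn⟩)
    refine ⟨hsub ?_, hCinf⟩
    rw [mem_pi]
    intro n hn
    have : charFun C n = charFun B n := by
      simp only [charFun, decide_eq_decide]
      exact hmemiff n (hIk n hn)
    rw [this]
    exact (hw n hn).2
  refine ⟨O, hO, cr0_of_finite ?_⟩
  rintro C (⟨hC1, hC2⟩ | ⟨hC1, hC2⟩)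
  · by_contra hfin
    exact hC2 ⟨hC1, hfin⟩
  · exact absurd hC1.1 hC2

end GP

/-- The Galvin–Prikry theorem: every Borel subset of `[ℕ]^ω` is Ramsey. -/
theorem galvin_prikry (X : Set (Set ℕ))
    (hX : @MeasurableSet (Set ℕ) (@borel (Set ℕ) cantorTopology) X)
    (hXinf : ∀ B ∈ X, Set.Infinite B)
    (s : Finset ℕ) (A : Set ℕ) (hA : A.Infinite) (hsA : ↑s ⊆ A)
    (hlt : ∀ x ∈ s, ∀ y ∈ A, y ∉ s → x < y) :
    ∃ B ∈ EllSet s A, EllSet s B ⊆ X ∨ Disjoint (EllSet s B) X := by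
  classical
  -- `X` has the Ellentuck Baire property
  have hBP : GP.BP X := by
    set m : MeasurableSpace (Set ℕ) :=
      { MeasurableSet' := GP.BP
        measurableSet_empty := GP.bp_empty
        measurableSet_compl := fun _ hs => GP.bp_compl hs
        measurableSet_iUnion := fun _ hf => GP.bp_iUnion hf } with hmdef
    have hle : @borel (Set ℕ) cantorTopology ≤ m :=
      MeasurableSpace.generateFrom_le (fun t ht => GP.bp_cantorOpen ht)
    exact hle X hX
  have hCR := GP.bp_cr hBP
  set A' : Set ℕ := A \ ↑s with hA'def
  have hOk : GP.Ok s A' := by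
    refine ⟨hA.diff s.finite_toSet, fun x hx y hy => ?_⟩
    exact hlt x hx y hy.1 (fun h => hy.2 (Finset.mem_coe.2 h))
  obtain ⟨B', hB'A', hB'inf, hcase⟩ := hCR s A' hOk
  have hslt : ∀ x ∈ s, ∀ y ∈ B', x < y := fun x hx y hy => hOk.2 x hx y (hB'A' hy)
  set B : Set ℕ := ↑s ∪ B' with hBdef
  have hBmem : B ∈ EllSet s A := by
    refine ⟨?_, Set.subset_union_left, ?_, ?_⟩
    · exact (hB'inf.mono Set.subset_union_right)
    · exact Set.union_subset hsA (hB'A'.trans Set.diff_subset)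
    · intro x hx y hy hys
      rcases hy with hy | hy
      · exact absurd (Finset.mem_coe.1 hy) hys
      · exact hslt x hx y hy
  have hEll : EllSet s B ⊆ GP.seg s B' := by
    rintro C ⟨hC1, hC2, hC3, _⟩
    exact ⟨hC1, hC2, hC3⟩
  refine ⟨B, hBmem, ?_⟩
  rcases hcase with hsub | hdisj
  · exact Or.inl fun C hC => hsub (hEll hC)
  · refine Or.inr (Set.disjoint_left.2 fun C hC hCX => ?_)
    exact (hdisj ▸ Set.mem_inter (hEll hC) hCX : C ∈ (∅ : Set (Set ℕ)))
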